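/- Let t = 2 and partition the agents as N1 = {i : v i 1 > v i 2} and N2 = {i : v i 2 ≥ v i 1}. Let N1+ ⊆ N1 be any subset and p ≥ 0 an integer, and let X be the allocation with X i = (p+1, 0) for i ∈ N1+, X i = (p, 0) for i ∈ N1 \ N1+, and X i = (0, p) for i ∈ N2. Then X is EFX. -/

import Mathlib

/-- Agent `i`'s additive value for the bundle `x`. -/
def value {n t : ℕ} (v : Fin n → Fin t → ℝ) (i : Fin n) (x : Fin t → ℕ) : ℝ :=
  ∑ a, v i a * (x a : ℝ)

/-- The allocation `X` is EFX for the additive valuations `v`. -/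
def IsEFX {n t : ℕ} (v : Fin n → Fin t → ℝ) (X : Fin n → Fin t → ℕ) : Prop :=
  ∀ i j : Fin n, i ≠ j → ∀ a : Fin t, 1 ≤ X j a →
    value v i (X i) ≥ value v i (X j) - v i a

theorem stmt_16 (n : ℕ) (v : Fin n → Fin 2 → ℝ)
    (hnonneg : ∀ i a, 0 ≤ v i a) (hpos : ∀ i, ∃ a, 0 < v i a)
    (N1p : Finset (Fin n)) (hN1p : ∀ i ∈ N1p, v i 0 > v i 1)
    (p : ℕ) (X : Fin n → Fin 2 → ℕ)
    (hX1 : ∀ i ∈ N1p, X i = ![p + 1, 0])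
    (hX2 : ∀ i ∉ N1p, v i 0 > v i 1 → X i = ![p, 0])
    (hX3 : ∀ i ∉ N1p, v i 1 ≥ v i 0 → X i = ![0, p]) :
    IsEFX v X := by

  intro i j hij a ha
  have key : ∀ k : Fin n, (X k = ![p + 1, 0] ∧ v k 0 > v k 1) ∨
      (X k = ![p, 0] ∧ v k 0 > v k 1) ∨ (X k = ![0, p] ∧ v k 1 ≥ v k 0) := by
    intro k
    by_cases hk : k ∈ N1p
    · exact Or.inl ⟨hX1 k hk, hN1p k hk⟩
    · rcases le_or_gt (v k 1) (v k 0) with h | h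
      · rcases lt_or_eq_of_le h with h' | h'
        · exact Or.inr (Or.inl ⟨hX2 k hk h', h'⟩)
        · exact Or.inr (Or.inr ⟨hX3 k hk h'.ge, h'.ge⟩)
      · exact Or.inr (Or.inr ⟨hX3 k hk h.le, h.le⟩)
  have h0i := hnonneg i 0
  have h1i := hnonneg i 1
  rcases key i with ⟨hXi, hvi⟩ | ⟨hXi, hvi⟩ | ⟨hXi, hvi⟩ <;>
    rcases key j with ⟨hXj, hvj⟩ | ⟨hXj, hvj⟩ | ⟨hXj, hvj⟩ <;>
    rw [hXj] at ha <;> fin_cases a <;>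
    simp_all [value, Fin.sum_univ_two] <;> nlinarith [(hnonneg i).1, (hnonneg i).2]
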